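/- For each n ≥ 1 let ψₙ₋₁ : {-1,+1}^{n-1} → {-1,+1} (with ψ₀ a constant) and define the bijection τₙ : {-1,+1}ⁿ → {-1,+1}ⁿ by τₙ(u₁,…,uₙ) = (v₁,…,vₙ) with v_k = ψ_{k-1}(u₁,…,u_{k-1})·u_k. Suppose τₙ, as a permutation of {-1,+1}ⁿ, is a single cycle of length 2ⁿ. Then τ_{n+1} is a single cycle of length 2^{n+1} if and only if ∏_{u ∈ {-1,+1}ⁿ} ψₙ(u) = -1. -/

import Mathlib

def cube (n : ℕ) : Finset (Fin n → ℤ) :=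
  Fintype.piFinset fun _ => ({-1, 1} : Finset ℤ)

def tau (ψ : (k : ℕ) → (Fin k → ℤ) → ℤ) (n : ℕ) (u : Fin n → ℤ) : Fin n → ℤ :=
  fun i => ψ i.val (fun j => u ⟨j.val, j.isLt.trans i.isLt⟩) * u i

lemma mem_cube {n : ℕ} {u : Fin n → ℤ} : u ∈ cube n ↔ ∀ i, u i = -1 ∨ u i = 1 := by
  simp [cube, Fintype.mem_piFinset]

lemma restrict_mem {n : ℕ} {u : Fin n → ℤ} (h : u ∈ cube n) {k : ℕ}
    (f : Fin k → Fin n) : (fun j => u (f j)) ∈ cube k := by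
  rw [mem_cube] at h ⊢; intro i; exact h _

lemma card_cube (n : ℕ) : (cube n).card = 2 ^ n := by
  have : ({-1, 1} : Finset ℤ).card = 2 := by decide
  simp [cube, Fintype.card_piFinset, this]

variable {ψ : (k : ℕ) → (Fin k → ℤ) → ℤ}

lemma tau_mem (hψ : ∀ k (v : Fin k → ℤ), v ∈ cube k → ψ k v = 1 ∨ ψ k v = -1)
    {n : ℕ} {u : Fin n → ℤ} (hu : u ∈ cube n) : tau ψ n u ∈ cube n := by
  rw [mem_cube]
  intro i
  have h1 := hψ i.val _ (restrict_mem hu (fun j : Fin i.val => ⟨j.val, j.isLt.trans i.isLt⟩))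
  have h2 := mem_cube.1 hu i
  rcases h1 with h1 | h1 <;> rcases h2 with h2 | h2 <;> simp [tau, h1, h2]

lemma tau_inj (hψ : ∀ k (v : Fin k → ℤ), v ∈ cube k → ψ k v = 1 ∨ ψ k v = -1)
    {n : ℕ} {u v : Fin n → ℤ} (hu : u ∈ cube n) (hv : v ∈ cube n)
    (h : tau ψ n u = tau ψ n v) : u = v := by
  have key : ∀ k : ℕ, ∀ hk : k < n, u ⟨k, hk⟩ = v ⟨k, hk⟩ := by
    intro k
    induction k using Nat.strong_induction_on with
    | _ k ih =>
      intro hk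
      have h3 : ψ k (fun j : Fin k => u ⟨j.val, j.isLt.trans hk⟩) * u ⟨k, hk⟩
          = ψ k (fun j : Fin k => v ⟨j.val, j.isLt.trans hk⟩) * v ⟨k, hk⟩ := congrFun h ⟨k, hk⟩
      have heq : (fun j : Fin k => u ⟨j.val, j.isLt.trans hk⟩)
          = (fun j : Fin k => v ⟨j.val, j.isLt.trans hk⟩) := by
        funext j; exact ih j.val j.isLt _
      rw [← heq] at h3
      have hne : ψ k (fun j : Fin k => u ⟨j.val, j.isLt.trans hk⟩) ≠ 0 := by
        rcases hψ k _ (restrict_mem hu (fun j : Fin k => ⟨j.val, j.isLt.trans hk⟩)) with h' | h' <;>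
          simp [h']
      exact mul_left_cancel₀ hne h3
  funext i
  exact key i.val i.isLt

lemma iter_mem (hψ : ∀ k (v : Fin k → ℤ), v ∈ cube k → ψ k v = 1 ∨ ψ k v = -1)
    {n : ℕ} {u : Fin n → ℤ} (hu : u ∈ cube n) (m : ℕ) : (tau ψ n)^[m] u ∈ cube n := by
  induction m with
  | zero => exact hu
  | succ m ih => rw [Function.iterate_succ_apply']; exact tau_mem hψ ih

lemma iter_cancel (hψ : ∀ k (v : Fin k → ℤ), v ∈ cube k → ψ k v = 1 ∨ ψ k v = -1)
    {n : ℕ} (a : ℕ) {x y : Fin n → ℤ} (hx : x ∈ cube n) (hy : y ∈ cube n)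
    (h : (tau ψ n)^[a] x = (tau ψ n)^[a] y) : x = y := by
  induction a with
  | zero => exact h
  | succ a ih =>
    rw [Function.iterate_succ_apply', Function.iterate_succ_apply'] at h
    exact ih (tau_inj hψ (iter_mem hψ hx a) (iter_mem hψ hy a) h)

lemma orbit_lemma (hψ : ∀ k (v : Fin k → ℤ), v ∈ cube k → ψ k v = 1 ∨ ψ k v = -1)
    {n : ℕ} (hcycle : ∀ u ∈ cube n, ∀ v ∈ cube n, ∃ m : ℕ, (tau ψ n)^[m] u = v)
    {u : Fin n → ℤ} (hu : u ∈ cube n) :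
    (tau ψ n)^[2 ^ n] u = u ∧
      (∏ j ∈ Finset.range (2 ^ n), ψ n ((tau ψ n)^[j] u) = ∏ v ∈ cube n, ψ n v) ∧
      ∀ p, 0 < p → p < 2 ^ n → (tau ψ n)^[p] u ≠ u := by
  set g : ℕ → (Fin n → ℤ) := fun j => (tau ψ n)^[j] u with hg
  have hper_small : ∀ p, 0 < p → p < 2 ^ n → g p ≠ u := by
    intro p hp hplt hcontra
    have hmod : ∀ m, g m = g (m % p) := by
      intro m
      induction m using Nat.strong_induction_on with
      | _ m ih =>
        by_cases hlt : m < p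
        · rw [Nat.mod_eq_of_lt hlt]
        · push_neg at hlt
          have h1 : g m = g (m - p) := by
            have : m - p + p = m := Nat.sub_add_cancel hlt
            calc g m = (tau ψ n)^[m - p + p] u := by rw [this]
              _ = (tau ψ n)^[m - p] ((tau ψ n)^[p] u) := Function.iterate_add_apply _ _ _ _
              _ = g (m - p) := by rw [show (tau ψ n)^[p] u = u from hcontra]
          rw [h1, ih (m - p) (by omega), Nat.mod_eq_sub_mod hlt]
    have hsub : cube n ⊆ (Finset.range p).image g := by
      intro v hv
      obtain ⟨m, hm⟩ := hcycle u hu v hv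
      exact Finset.mem_image.2 ⟨m % p, Finset.mem_range.2 (Nat.mod_lt _ hp), by rw [← hmod]; exact hm⟩
    have := Finset.card_le_card hsub
    have h2 := Finset.card_image_le (s := Finset.range p) (f := g)
    rw [card_cube] at this
    simp at h2
    omega
  have hinj : ∀ a b, a ≤ b → b < 2 ^ n → g a = g b → a = b := by
    intro a b hab hb h
    have h1 : (tau ψ n)^[a] ((tau ψ n)^[b - a] u) = (tau ψ n)^[a] u := by
      rw [← Function.iterate_add_apply, show a + (b - a) = b from by omega]
      exact h.symm
    have h2 : (tau ψ n)^[b - a] u = u := iter_cancel hψ a (iter_mem hψ hu _) hu h1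
    by_contra hne
    exact hper_small (b - a) (by omega) (by omega) h2
  have hinj' : ∀ a ∈ Finset.range (2 ^ n), ∀ b ∈ Finset.range (2 ^ n), g a = g b → a = b := by
    intro a ha b hb h
    simp only [Finset.mem_range] at ha hb
    rcases le_total a b with hle | hle
    · exact hinj a b hle hb h
    · exact (hinj b a hle ha h.symm).symm
  have himage : (Finset.range (2 ^ n)).image g = cube n := by
    apply Finset.eq_of_subset_of_card_le
    · intro v hv
      obtain ⟨j, _, hj⟩ := Finset.mem_image.1 hv
      rw [← hj]; exact iter_mem hψ hu j
    · rw [card_cube, Finset.card_image_of_injOn (fun a ha b hb h => hinj' a (by simpa using ha) b (by simpa using hb) h)]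
      simp
  have hperiod : (tau ψ n)^[2 ^ n] u = u := by
    have hmem : (tau ψ n)^[2 ^ n] u ∈ (Finset.range (2 ^ n)).image g := by
      rw [himage]; exact iter_mem hψ hu _
    obtain ⟨j, hj, hgj⟩ := Finset.mem_image.1 hmem
    simp only [Finset.mem_range] at hj
    rcases Nat.eq_zero_or_pos j with h0 | h0
    · rw [h0] at hgj; exact hgj.symm ▸ rfl
    · exfalso
      have h1 : (tau ψ n)^[j] ((tau ψ n)^[2 ^ n - j] u) = (tau ψ n)^[j] u := by
        rw [← Function.iterate_add_apply, show j + (2 ^ n - j) = 2 ^ n from by omega]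
        exact hgj.symm
      have h2 : (tau ψ n)^[2 ^ n - j] u = u :=
        iter_cancel hψ j (iter_mem hψ hu _) hu h1
      exact hper_small (2 ^ n - j) (by omega) (by omega) h2
  refine ⟨hperiod, ?_, hper_small⟩
  rw [← himage, Finset.prod_image hinj']

lemma orbit_mul (hψ : ∀ k (v : Fin k → ℤ), v ∈ cube k → ψ k v = 1 ∨ ψ k v = -1)
    {n : ℕ} (hcycle : ∀ u ∈ cube n, ∀ v ∈ cube n, ∃ m : ℕ, (tau ψ n)^[m] u = v)
    {u : Fin n → ℤ} (hu : u ∈ cube n) (q r : ℕ) :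
    (tau ψ n)^[q * 2 ^ n + r] u = (tau ψ n)^[r] u ∧
      ∏ j ∈ Finset.range (q * 2 ^ n + r), ψ n ((tau ψ n)^[j] u)
        = (∏ v ∈ cube n, ψ n v) ^ q * ∏ j ∈ Finset.range r, ψ n ((tau ψ n)^[j] u) := by
  obtain ⟨hper, hprod, -⟩ := orbit_lemma hψ hcycle hu
  have block : ∀ s : ℕ, (tau ψ n)^[2 ^ n + s] u = (tau ψ n)^[s] u ∧
      ∏ j ∈ Finset.range (2 ^ n + s), ψ n ((tau ψ n)^[j] u)
        = (∏ v ∈ cube n, ψ n v) * ∏ j ∈ Finset.range s, ψ n ((tau ψ n)^[j] u) := by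
    intro s
    constructor
    · rw [show 2 ^ n + s = s + 2 ^ n from by omega, Function.iterate_add_apply, hper]
    · rw [Finset.prod_range_add, hprod]
      congr 1
      apply Finset.prod_congr rfl
      intro j _
      rw [show 2 ^ n + j = j + 2 ^ n from by omega, Function.iterate_add_apply, hper]
  induction q with
  | zero => simp
  | succ q ih =>
    have heq : (q + 1) * 2 ^ n + r = 2 ^ n + (q * 2 ^ n + r) := by ring
    rw [heq]
    obtain ⟨b1, b2⟩ := block (q * 2 ^ n + r)
    refine ⟨by rw [b1, ih.1], ?_⟩
    rw [b2, ih.2, pow_succ]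
    ring

def proj {n : ℕ} (u : Fin (n + 1) → ℤ) : Fin n → ℤ := fun i => u i.castSucc

lemma proj_tau {n : ℕ} (U : Fin (n + 1) → ℤ) :
    proj (tau ψ (n + 1) U) = tau ψ n (proj U) := rfl

lemma last_tau {n : ℕ} (U : Fin (n + 1) → ℤ) :
    tau ψ (n + 1) U (Fin.last n) = ψ n (proj U) * U (Fin.last n) := rfl

lemma proj_iter {n : ℕ} (U : Fin (n + 1) → ℤ) (m : ℕ) :
    proj ((tau ψ (n + 1))^[m] U) = (tau ψ n)^[m] (proj U) := by
  induction m with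
  | zero => rfl
  | succ m ih =>
    rw [Function.iterate_succ_apply', Function.iterate_succ_apply', proj_tau, ih]

lemma last_iter {n : ℕ} (U : Fin (n + 1) → ℤ) (m : ℕ) :
    (tau ψ (n + 1))^[m] U (Fin.last n)
      = (∏ j ∈ Finset.range m, ψ n ((tau ψ n)^[j] (proj U))) * U (Fin.last n) := by
  induction m with
  | zero => simp
  | succ m ih =>
    rw [Function.iterate_succ_apply', last_tau, proj_iter, ih, Finset.prod_range_succ]
    ring

lemma ext_last {n : ℕ} {U V : Fin (n + 1) → ℤ} (h1 : proj U = proj V)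
    (h2 : U (Fin.last n) = V (Fin.last n)) : U = V := by
  funext i
  induction i using Fin.lastCases with
  | last => exact h2
  | cast j => exact congrFun h1 j

lemma proj_mem {n : ℕ} {U : Fin (n + 1) → ℤ} (h : U ∈ cube (n + 1)) : proj U ∈ cube n :=
  restrict_mem h _

lemma snoc_mem {n : ℕ} {u : Fin n → ℤ} (hu : u ∈ cube n) {x : ℤ} (hx : x = -1 ∨ x = 1) :
    Fin.snoc u x ∈ cube (n + 1) := by
  rw [mem_cube]
  intro i
  induction i using Fin.lastCases with
  | last => simpa using hx
  | cast j => simpa using mem_cube.1 hu j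

lemma proj_snoc {n : ℕ} (u : Fin n → ℤ) (x : ℤ) : proj (Fin.snoc u x) = u := by
  funext i; simp [proj]

lemma prod_pm {α : Type*} (s : Finset α) (f : α → ℤ) (h : ∀ x ∈ s, f x = 1 ∨ f x = -1) :
    (∏ x ∈ s, f x) = 1 ∨ (∏ x ∈ s, f x) = -1 := by
  refine Finset.prod_induction f (fun z => z = 1 ∨ z = -1) ?_ (Or.inl rfl) h
  rintro a b (rfl | rfl) (rfl | rfl) <;> norm_num

theorem stmt15 (n : ℕ) (ψ : (k : ℕ) → (Fin k → ℤ) → ℤ)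
    (hψ : ∀ k (v : Fin k → ℤ), v ∈ cube k → ψ k v = 1 ∨ ψ k v = -1)
    (hcycle : ∀ u ∈ cube n, ∀ v ∈ cube n, ∃ m : ℕ, (tau ψ n)^[m] u = v) :
    (∀ u ∈ cube (n + 1), ∀ v ∈ cube (n + 1), ∃ m : ℕ, (tau ψ (n + 1))^[m] u = v)
      ↔ ∏ u ∈ cube n, ψ n u = -1 := by
  constructor
  · intro h
    rcases prod_pm (cube n) (ψ n) (fun v hv => hψ n v hv) with hP | hP
    · exfalso
      set u0 : Fin n → ℤ := fun _ => 1 with hu0def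
      have hu0 : u0 ∈ cube n := mem_cube.2 fun i => Or.inr rfl
      have hU : Fin.snoc u0 (1 : ℤ) ∈ cube (n + 1) := snoc_mem hu0 (Or.inr rfl)
      have hV : Fin.snoc u0 (-1 : ℤ) ∈ cube (n + 1) := snoc_mem hu0 (Or.inl rfl)
      obtain ⟨m, hm⟩ := h _ hU _ hV
      have hproj : (tau ψ n)^[m] u0 = u0 := by
        have := congrArg proj hm
        rwa [proj_iter, proj_snoc, proj_snoc] at this
      have hlast : (∏ j ∈ Finset.range m, ψ n ((tau ψ n)^[j] u0)) = -1 := by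
        have := congrFun hm (Fin.last n)
        rw [last_iter, proj_snoc] at this
        simpa using this
      obtain ⟨o1, o2⟩ := orbit_mul hψ hcycle hu0 (m / 2 ^ n) (m % 2 ^ n)
      have hpos : 0 < 2 ^ n := by positivity
      have hmeq : m / 2 ^ n * 2 ^ n + m % 2 ^ n = m := by
        exact Nat.div_add_mod' m (2 ^ n)
      obtain ⟨-, -, hsmall⟩ := orbit_lemma hψ hcycle hu0
      have hr0 : m % 2 ^ n = 0 := by
        by_contra hr
        refine hsmall (m % 2 ^ n) (by omega) (Nat.mod_lt _ hpos) ?_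
        rw [← o1, hmeq]; exact hproj
      rw [hmeq] at o2
      rw [o2, hP, hr0] at hlast
      simp at hlast
    · exact hP
  · intro hP U hU V hV
    have hu : proj U ∈ cube n := proj_mem hU
    have hv : proj V ∈ cube n := proj_mem hV
    obtain ⟨m, hm⟩ := hcycle _ hu _ hv
    set S := ∏ j ∈ Finset.range m, ψ n ((tau ψ n)^[j] (proj U)) with hSdef
    have hS : S = 1 ∨ S = -1 :=
      prod_pm _ _ fun j _ => hψ n _ (iter_mem hψ hu j)
    have hUlast := mem_cube.1 hU (Fin.last n)
    have hVlast := mem_cube.1 hV (Fin.last n)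
    by_cases hc : S * U (Fin.last n) = V (Fin.last n)
    · exact ⟨m, ext_last (by rw [proj_iter]; exact hm) (by rw [last_iter]; exact hc)⟩
    · refine ⟨m + 2 ^ n, ext_last ?_ ?_⟩
      · rw [proj_iter, show m + 2 ^ n = 2 ^ n + m from by omega,
          Function.iterate_add_apply, hm]
        exact (orbit_lemma hψ hcycle hv).1
      · rw [last_iter, Finset.prod_range_add]
        have hshift : ∏ j ∈ Finset.range (2 ^ n), ψ n ((tau ψ n)^[m + j] (proj U))
            = ∏ j ∈ Finset.range (2 ^ n), ψ n ((tau ψ n)^[j] (proj V)) := by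
          apply Finset.prod_congr rfl
          intro j _
          rw [show m + j = j + m from by omega, Function.iterate_add_apply, hm]
        rw [hshift, (orbit_lemma hψ hcycle hv).2.1, hP, ← hSdef]
        rcases hS with hS | hS <;> rcases hUlast with h1 | h1 <;> rcases hVlast with h2 | h2 <;>
          rw [hS, h1, h2] at hc ⊢ <;> revert hc <;> norm_num
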